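/- Fix ρ ∈ ℝ. Set x_k = k + ρ − 1 and y_k = kρ for k ≥ 1. Define the (normalized) Motzkin moments a_n as the weighted sum over Motzkin paths of length n, where each horizontal step at height k has weight x_{k+1} and each up-step from height k−1 to height k (paired with its matching down-step) has weight y_k. Then a_n = Σ_{π ∈ Π(n)} ρ^{#blocks(π)}, the sum over all set partitions of {1,...,n} weighted by ρ to the number of blocks (the Bell/Touchard polynomial). -/
import Mathlib


/-- A Motzkin path of length `n` encoded by its height function `h : ℕ → ℕ`:
`h 0 = 0`, `h n = 0` (and `h i = 0` for `i ≥ n`), with steps `±1` or `0`. -/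
def IsMotzkinHt (n : ℕ) (h : ℕ → ℕ) : Prop :=
  h 0 = 0 ∧ h n = 0 ∧ (∀ i, n ≤ i → h i = 0) ∧
  ∀ i < n, h (i + 1) ≤ h i + 1 ∧ h i ≤ h (i + 1) + 1

/-- Charlier weight of a Motzkin path: a horizontal step at height `k` carries
weight `x_{k+1} = k + ρ`; a down-step from height `k` carries the weight
`y_k = k⬝ρ` of its matching up-step; up-steps carry weight `1`. -/
noncomputable def motzWeight (ρ : ℝ) (n : ℕ) (h : ℕ → ℕ) : ℝ :=
  ∏ i ∈ Finset.range n,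
    (if h (i + 1) = h i then (h i : ℝ) + ρ
     else if h (i + 1) + 1 = h i then (h i : ℝ) * ρ
     else 1)

open scoped Classical

noncomputable instance setoidFinite (n : ℕ) : Fintype (Setoid (Fin n)) := by
  have : Finite (Setoid (Fin n)) := by
    apply Finite.of_injective (fun s : Setoid (Fin n) => s.r)
    intro a b h
    exact Setoid.ext fun x y => iff_of_eq (congrFun (congrFun h x) y)
  exact Fintype.ofFinite _

noncomputable instance quotFintype (n : ℕ) (s : Setoid (Fin n)) : Fintype (Quotient s) :=
  Fintype.ofFinite _

/-- the class function of the extension -/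
def cfun {n : ℕ} (s : Setoid (Fin n)) (o : Option (Quotient s)) :
    Fin (n+1) → Option (Quotient s) :=
  fun a => Fin.lastCases o (fun j => some ⟦j⟧) a

/-- extend a setoid on `Fin n` to `Fin (n+1)`: the new element `last` is a new
singleton class (`o = none`) or joins class `q` (`o = some q`). -/
def extSetoid {n : ℕ} (s : Setoid (Fin n)) (o : Option (Quotient s)) : Setoid (Fin (n+1)) :=
  Setoid.ker (cfun s o)

lemma cfun_cast {n : ℕ} (s : Setoid (Fin n)) (o : Option (Quotient s)) (j : Fin n) :
    cfun s o (Fin.castSucc j) = some ⟦j⟧ := by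
  simp [cfun]

lemma cfun_last {n : ℕ} (s : Setoid (Fin n)) (o : Option (Quotient s)) :
    cfun s o (Fin.last n) = o := by
  simp [cfun]

lemma ext_rel_cast {n : ℕ} (s : Setoid (Fin n)) (o : Option (Quotient s)) (i j : Fin n) :
    (extSetoid s o).r (Fin.castSucc i) (Fin.castSucc j) ↔ s.r i j := by
  show cfun s o _ = cfun s o _ ↔ _
  rw [cfun_cast, cfun_cast]
  rw [Option.some_inj]
  exact ⟨fun h => Quotient.eq.mp h, fun h => Quotient.sound h⟩

lemma ext_rel_last {n : ℕ} (s : Setoid (Fin n)) (o : Option (Quotient s)) (j : Fin n) :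
    (extSetoid s o).r (Fin.castSucc j) (Fin.last n) ↔ o = some ⟦j⟧ := by
  show cfun s o _ = cfun s o _ ↔ _
  rw [cfun_cast, cfun_last]
  exact eq_comm

def resSetoid {n : ℕ} (s' : Setoid (Fin (n+1))) : Setoid (Fin n) :=
  Setoid.comap Fin.castSucc s'

lemma res_rel {n : ℕ} (s' : Setoid (Fin (n+1))) (i j : Fin n) :
    (resSetoid s').r i j ↔ s'.r (Fin.castSucc i) (Fin.castSucc j) := Iff.rfl

lemma res_ext {n : ℕ} (s : Setoid (Fin n)) (o : Option (Quotient s)) :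
    resSetoid (extSetoid s o) = s :=
  Setoid.ext fun i j => (res_rel _ i j).trans (ext_rel_cast s o i j)

lemma ext_inj {n : ℕ} :
    Function.Injective
      (fun p : Σ s : Setoid (Fin n), Option (Quotient s) => extSetoid p.1 p.2) := by
  rintro ⟨s, o⟩ ⟨s', o'⟩ h
  simp only at h
  have hs : s = s' := by rw [← res_ext s o, ← res_ext s' o', h]
  subst hs
  have ho : o = o' := by
    have key : ∀ j : Fin n, o = some ⟦j⟧ ↔ o' = some ⟦j⟧ := fun j => by
      rw [← ext_rel_last s o j, ← ext_rel_last s o' j, h]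
    cases o with
    | none =>
      cases o' with
      | none => rfl
      | some q =>
        obtain ⟨j, rfl⟩ := q.exists_rep
        exact absurd ((key j).mpr rfl) (by simp)
    | some q =>
      obtain ⟨j, rfl⟩ := q.exists_rep
      exact ((key j).mp rfl).symm
  rw [ho]

lemma ext_surj {n : ℕ} (s' : Setoid (Fin (n+1))) :
    ∃ p : Σ s : Setoid (Fin n), Option (Quotient s), extSetoid p.1 p.2 = s' := by
  set s := resSetoid s' with hsdef
  by_cases hex : ∃ j : Fin n, s'.r (Fin.castSucc j) (Fin.last n)
  · obtain ⟨j0, hj0⟩ := hex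
    refine ⟨⟨s, some ⟦j0⟧⟩, Setoid.ext fun a b => ?_⟩
    induction a using Fin.lastCases with
    | last =>
      induction b using Fin.lastCases with
      | last => exact iff_of_true ((extSetoid s (some ⟦j0⟧)).iseqv.refl _) (s'.iseqv.refl _)
      | cast j =>
        have h1 : (extSetoid s (some ⟦j0⟧)).r (Fin.castSucc j) (Fin.last n)
            ↔ s'.r (Fin.castSucc j) (Fin.last n) := by
          rw [ext_rel_last, Option.some_inj]
          constructor
          · intro hq
            have : s.r j0 j := Quotient.eq.mp hq
            exact Setoid.trans' s' (Setoid.symm' s' this) hj0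
          · intro hb
            exact Quotient.sound (Setoid.trans' s' hj0 (Setoid.symm' s' hb))
        constructor
        · intro hr; exact Setoid.symm' s' (h1.mp (Setoid.symm' _ hr))
        · intro hr; exact Setoid.symm' _ (h1.mpr (Setoid.symm' s' hr))
    | cast i =>
      induction b using Fin.lastCases with
      | last =>
        rw [ext_rel_last, Option.some_inj]
        constructor
        · intro hq
          have : s.r j0 i := Quotient.eq.mp hq
          exact Setoid.trans' s' (Setoid.symm' s' this) hj0
        · intro hb
          exact Quotient.sound (Setoid.trans' s' hj0 (Setoid.symm' s' hb))
      | cast j => rw [ext_rel_cast]; exact res_rel s' i j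
  · refine ⟨⟨s, none⟩, Setoid.ext fun a b => ?_⟩
    induction a using Fin.lastCases with
    | last =>
      induction b using Fin.lastCases with
      | last => exact iff_of_true ((extSetoid s none).iseqv.refl _) (s'.iseqv.refl _)
      | cast j =>
        refine iff_of_false (fun hr => ?_) (fun hb => hex ⟨j, Setoid.symm' s' hb⟩)
        have := (ext_rel_last s none j).mp (Setoid.symm' _ hr)
        simp at this
    | cast i =>
      induction b using Fin.lastCases with
      | last =>
        refine iff_of_false (fun hr => ?_) (fun hb => hex ⟨i, hb⟩)
        have := (ext_rel_last s none i).mp hr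
        simp at this
      | cast j => rw [ext_rel_cast]; exact res_rel s' i j

lemma card_ext_none {n : ℕ} (s : Setoid (Fin n)) :
    Nat.card (Quotient (extSetoid s none)) = Nat.card (Quotient s) + 1 := by
  have e := Setoid.quotientKerEquivRange (cfun s none)
  rw [show extSetoid s none = Setoid.ker (cfun s none) from rfl, Nat.card_congr e]
  have hr : Set.range (cfun s none) = Set.univ := by
    ext x
    simp only [Set.mem_univ, iff_true, Set.mem_range]
    cases x with
    | none => exact ⟨Fin.last n, cfun_last s none⟩
    | some q =>
      obtain ⟨j, rfl⟩ := q.exists_rep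
      exact ⟨Fin.castSucc j, cfun_cast s none j⟩
  rw [hr]
  rw [Nat.card_congr (Equiv.Set.univ _)]
  simp [Nat.card_eq_fintype_card]

lemma card_ext_some {n : ℕ} (s : Setoid (Fin n)) (q : Quotient s) :
    Nat.card (Quotient (extSetoid s (some q))) = Nat.card (Quotient s) := by
  have e := Setoid.quotientKerEquivRange (cfun s (some q))
  rw [show extSetoid s (some q) = Setoid.ker (cfun s (some q)) from rfl, Nat.card_congr e]
  have hr : Set.range (cfun s (some q)) = Set.range (Option.some) := by
    ext x
    simp only [Set.mem_range]
    constructor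
    · rintro ⟨a, rfl⟩
      induction a using Fin.lastCases with
      | last => exact ⟨q, (cfun_last s (some q)).symm⟩
      | cast j => exact ⟨⟦j⟧, (cfun_cast s (some q) j).symm⟩
    · rintro ⟨q', rfl⟩
      obtain ⟨j, rfl⟩ := q'.exists_rep
      exact ⟨Fin.castSucc j, cfun_cast s (some q) j⟩
  rw [hr, Nat.card_range_of_injective (Option.some_injective _)]

lemma setoid_sum_rec (n : ℕ) (f : ℕ → ℝ) :
    ∑ s' : Setoid (Fin (n+1)), f (Nat.card (Quotient s')) =
      ∑ s : Setoid (Fin n),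
        (f (Nat.card (Quotient s) + 1)
          + (Nat.card (Quotient s) : ℝ) * f (Nat.card (Quotient s))) := by
  rw [← Fintype.sum_bijective
      (fun p : Σ s : Setoid (Fin n), Option (Quotient s) => extSetoid p.1 p.2)
      ⟨ext_inj, fun s' => (ext_surj s')⟩
      (fun p => f (Nat.card (Quotient (extSetoid p.1 p.2))))
      (fun s' => f (Nat.card (Quotient s'))) (fun p => rfl)]
  rw [← Finset.univ_sigma_univ, Finset.sum_sigma]
  refine Finset.sum_congr rfl fun s _ => ?_
  rw [Fintype.sum_option]
  rw [card_ext_none]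
  have : ∀ q : Quotient s, f (Nat.card (Quotient (extSetoid s (some q))))
      = f (Nat.card (Quotient s)) := fun q => by rw [card_ext_some]
  rw [Finset.sum_congr rfl (fun q _ => this q), Finset.sum_const, Nat.card_eq_fintype_card]
  simp [nsmul_eq_mul]

noncomputable def F (ρ : ℝ) (k b : ℕ) : ℝ := (Nat.choose b k : ℝ) * ρ ^ (b - k)

lemma pow_pred_helper (ρ : ℝ) (m : ℕ) : (m : ℝ) * (ρ * ρ^(m-1)) = (m:ℝ) * ρ^m := by
  cases m with
  | zero => simp
  | succ i => push_cast; rw [pow_succ]; ring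

lemma Fid (ρ : ℝ) (k b : ℕ) :
    F ρ k (b+1) + (b:ℝ) * F ρ k b
      = ((k:ℝ)+ρ) * F ρ k b + ((k:ℝ)+1)*ρ*(F ρ (k+1) b)
        + (if k = 0 then 0 else F ρ (k-1) b) := by
  cases k with
  | zero =>
    simp only [F, Nat.choose_zero_right, Nat.choose_one_right, if_pos rfl, Nat.cast_one,
      Nat.cast_zero, Nat.sub_zero, one_mul, zero_add, add_zero]
    cases b with
    | zero => simp
    | succ m =>
      push_cast
      ring
  | succ j =>
    rcases le_or_gt (j+1) b with hle | hlt
    · -- k = j+1 ≤ b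
      obtain ⟨m, rfl⟩ : ∃ m, b = (j+1) + m := ⟨b - (j+1), by omega⟩
      simp only [F, if_neg (Nat.succ_ne_zero j), Nat.succ_sub_one]
      have e1 : (j+1) + m + 1 - (j+1) = m + 1 := by omega
      have e2 : (j+1) + m - (j+1) = m := by omega
      have e3 : (j+1) + m - (j+1+1) = m - 1 := by omega
      have e4 : (j+1) + m - j = m + 1 := by omega
      rw [e1, e2, e3, e4]
      have pascal : (Nat.choose ((j+1)+m+1) (j+1) : ℝ)
          = Nat.choose ((j+1)+m) j + Nat.choose ((j+1)+m) (j+1) := by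
        rw [show (j+1)+m+1 = ((j+1)+m)+1 from rfl, Nat.choose_succ_succ ((j+1)+m) j]
        push_cast; ring
      have rightR : (Nat.choose ((j+1)+m) (j+1+1) : ℝ) * ((j:ℝ)+1+1)
          = (Nat.choose ((j+1)+m) (j+1) : ℝ) * m := by
        have h := Nat.choose_succ_right_eq ((j+1)+m) (j+1)
        rw [e2] at h
        exact_mod_cast h
      have h_pp := pow_pred_helper ρ m
      have h_ps : ρ^(m+1) = ρ^m * ρ := pow_succ ρ m
      push_cast
      linear_combination ρ^(m+1) * pascal
        + ((Nat.choose ((j+1)+m) (j+1) : ℝ)) * h_ps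
        - (ρ * ρ^(m-1)) * rightR
        - ((Nat.choose ((j+1)+m) (j+1) : ℝ)) * h_pp
    · -- b < j+1
      have h1 : Nat.choose b (j+1) = 0 := Nat.choose_eq_zero_of_lt hlt
      have h2 : Nat.choose b (j+2) = 0 := Nat.choose_eq_zero_of_lt (by omega)
      have h3 : Nat.choose (b+1) (j+1) = Nat.choose b j + Nat.choose b (j+1) :=
        Nat.choose_succ_succ b j
      have h4 : b + 1 - (j+1) = b - j := by omega
      simp only [F, if_neg (Nat.succ_ne_zero j), Nat.succ_sub_one, h1, h2, h3, h4]
      push_cast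
      ring

noncomputable def G (ρ : ℝ) (n k : ℕ) : ℝ :=
  ∑ s : Setoid (Fin n), F ρ k (Nat.card (Quotient s))

lemma G_zero (ρ : ℝ) (k : ℕ) : G ρ 0 k = if k = 0 then 1 else 0 := by
  haveI : Subsingleton (Setoid (Fin 0)) := ⟨fun a b => Setoid.ext fun x => x.elim0⟩
  have hone : Fintype.card (Setoid (Fin 0)) = 1 :=
    Fintype.card_eq_one_iff.mpr ⟨(⊥ : Setoid (Fin 0)), fun y => Subsingleton.elim y _⟩
  have hval : ∀ s : Setoid (Fin 0), F ρ k (Nat.card (Quotient s)) = if k = 0 then 1 else 0 := by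
    intro s
    haveI : IsEmpty (Quotient s) := ⟨fun q => by obtain ⟨j, _⟩ := q.exists_rep; exact j.elim0⟩
    rw [Nat.card_of_isEmpty]
    cases k with
    | zero => simp [F]
    | succ j => simp [F, Nat.choose]
  rw [G, Finset.sum_congr rfl (fun s _ => hval s), Finset.sum_const, Finset.card_univ, hone]
  simp

lemma G_succ (ρ : ℝ) (n k : ℕ) :
    G ρ (n+1) k = ((k:ℝ)+ρ) * G ρ n k + ((k:ℝ)+1)*ρ * G ρ n (k+1)
      + (if k = 0 then 0 else G ρ n (k-1)) := by
  rw [G, setoid_sum_rec n (fun b => F ρ k b)]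
  have point : ∀ s : Setoid (Fin n),
      F ρ k (Nat.card (Quotient s) + 1)
        + (Nat.card (Quotient s) : ℝ) * F ρ k (Nat.card (Quotient s))
      = ((k:ℝ)+ρ) * F ρ k (Nat.card (Quotient s))
        + ((k:ℝ)+1)*ρ*(F ρ (k+1) (Nat.card (Quotient s)))
        + (if k = 0 then 0 else F ρ (k-1) (Nat.card (Quotient s))) :=
    fun s => Fid ρ k _
  rw [Finset.sum_congr rfl (fun s _ => point s), Finset.sum_add_distrib,
    Finset.sum_add_distrib, ← Finset.mul_sum, ← Finset.mul_sum]
  rw [G, G, G]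
  by_cases hk : k = 0 <;> simp [hk]

/-! ## Path side -/

def Sset (n k : ℕ) : Set (ℕ → ℕ) :=
  {h | h 0 = 0 ∧ (∀ i, n ≤ i → h i = k) ∧ ∀ i < n, h (i + 1) ≤ h i + 1 ∧ h i ≤ h (i + 1) + 1}

def extFun (n k : ℕ) (h : ℕ → ℕ) : ℕ → ℕ := fun i => if i ≤ n then h i else k

lemma extFun_mem {n k k' : ℕ} (hadj : k' = k ∨ k' = k + 1 ∨ k = k' + 1)
    {h : ℕ → ℕ} (hh : h ∈ Sset n k') : extFun n k h ∈ Sset (n+1) k := by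
  obtain ⟨h0, hge, hstep⟩ := hh
  refine ⟨?_, ?_, ?_⟩
  · simp [extFun, h0]
  · intro i hi
    simp only [extFun]
    rw [if_neg (by omega)]
  · intro i hi
    rcases Nat.lt_or_ge i n with hin | hin
    · simp only [extFun]
      rw [if_pos (by omega), if_pos (by omega)]
      exact hstep i hin
    · have hin' : i = n := by omega
      simp only [extFun]
      rw [if_neg (by omega), if_pos (by omega), hin', hge n (le_refl n)]
      omega

lemma extFun_injOn {n k k' : ℕ} : Set.InjOn (extFun n k) (Sset n k') := by
  intro h1 hh1 h2 hh2 heq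
  funext i
  rcases le_or_gt i n with hi | hi
  · have := congrFun heq i
    simpa [extFun, if_pos hi] using this
  · rw [hh1.2.1 i (by omega), hh2.2.1 i (by omega)]

lemma mem_sset_val {n k : ℕ} {h : ℕ → ℕ} (hh : h ∈ Sset n k) : h n = k :=
  hh.2.1 n (le_refl n)

lemma extFun_weight (ρ : ℝ) {n k k' : ℕ} {h : ℕ → ℕ} (hh : h ∈ Sset n k') :
    motzWeight ρ (n+1) (extFun n k h)
      = motzWeight ρ n h *
        (if k = k' then (k':ℝ) + ρ else if k + 1 = k' then (k':ℝ) * ρ else 1) := by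
  rw [motzWeight, Finset.prod_range_succ]
  have hterm : ∀ i < n,
      (if extFun n k h (i + 1) = extFun n k h i then (extFun n k h i : ℝ) + ρ
       else if extFun n k h (i + 1) + 1 = extFun n k h i then (extFun n k h i : ℝ) * ρ
       else 1)
      = (if h (i + 1) = h i then (h i : ℝ) + ρ
       else if h (i + 1) + 1 = h i then (h i : ℝ) * ρ else 1) := by
    intro i hi
    have e1 : extFun n k h (i+1) = h (i+1) := if_pos (by omega)
    have e2 : extFun n k h i = h i := if_pos (by omega)
    rw [e1, e2]
  rw [Finset.prod_congr rfl (fun i hi => hterm i (Finset.mem_range.mp hi))]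
  rw [← motzWeight]
  have e1 : extFun n k h (n+1) = k := if_neg (by omega)
  have e2 : extFun n k h n = k' := by
    have : extFun n k h n = h n := if_pos (le_refl n)
    rw [this]; exact mem_sset_val hh
  rw [e1, e2]

lemma sset_succ_sub {n k : ℕ} {h : ℕ → ℕ} (hh : h ∈ Sset (n+1) k) :
    ∃ k', (k' = k ∨ k' = k + 1 ∨ k = k' + 1) ∧ ∃ h' ∈ Sset n k', extFun n k h' = h := by
  obtain ⟨h0, hge, hstep⟩ := hh
  set k' := h n with hk'
  have hadj : k' = k ∨ k' = k + 1 ∨ k = k' + 1 := by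
    have := hstep n (by omega)
    have := hge (n+1) (le_refl (n+1))
    omega
  have hmem : (fun i => if i ≤ n then h i else k') ∈ Sset n k' := by
    refine ⟨by simp [h0], fun i hi => ?_, fun i hi => ?_⟩
    · show (if i ≤ n then h i else k') = k'
      rcases Nat.eq_or_lt_of_le hi with rfl | hlt
      · simp [hk']
      · rw [if_neg (by omega)]
    · constructor
      · show (if i+1 ≤ n then h (i+1) else k') ≤ (if i ≤ n then h i else k') + 1
        rw [if_pos (by omega), if_pos (by omega)]
        exact (hstep i (by omega)).1
      · show (if i ≤ n then h i else k') ≤ (if i+1 ≤ n then h (i+1) else k') + 1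
        rw [if_pos (by omega), if_pos (by omega)]
        exact (hstep i (by omega)).2
  have hext : extFun n k (fun i => if i ≤ n then h i else k') = h := by
    funext i
    rcases le_or_gt i n with hi | hi
    · simp [extFun, if_pos hi]
    · show (if i ≤ n then (fun i => if i ≤ n then h i else k') i else k) = h i
      rw [if_neg (by omega), hge i (by omega)]
  exact ⟨k', hadj, ⟨(fun i => if i ≤ n then h i else k'), hmem, hext⟩⟩

lemma sset_finite (n k : ℕ) : (Sset n k).Finite := by
  induction n generalizing k with
  | zero =>
    apply Set.Finite.subset (Set.finite_singleton (fun _ => 0))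
    rintro h ⟨h0, hge, -⟩
    have : ∀ i, h i = 0 := fun i => by
      have := hge i (Nat.zero_le i)
      have h00 := hge 0 (le_refl 0)
      omega
    exact Set.mem_singleton_iff.mpr (funext this)
  | succ n ih =>
    apply Set.Finite.subset
      (Set.Finite.image (extFun n k) (((ih k).union (ih (k+1))).union (ih (k-1))))
    intro h hh
    obtain ⟨k', hadj, h', hmem, hext⟩ := sset_succ_sub hh
    refine ⟨h', ?_, hext⟩
    rcases hadj with ha | ha | ha
    · exact Or.inl (Or.inl (ha ▸ hmem))
    · exact Or.inl (Or.inr (ha ▸ hmem))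
    · refine Or.inr ?_
      have : k' = k - 1 := by omega
      exact this ▸ hmem

noncomputable def L (ρ : ℝ) (n k : ℕ) : ℝ := ∑ᶠ h ∈ Sset n k, motzWeight ρ n h

lemma L_zero (ρ : ℝ) (k : ℕ) : L ρ 0 k = if k = 0 then 1 else 0 := by
  rcases eq_or_ne k 0 with rfl | hk
  · have hset : Sset 0 0 = {fun _ => 0} := by
      ext h
      constructor
      · rintro ⟨h0, hge, -⟩
        exact Set.mem_singleton_iff.mpr (funext fun i => hge i (Nat.zero_le i))
      · rintro rfl
        exact ⟨rfl, fun i _ => rfl, fun i hi => absurd hi (Nat.not_lt_zero i)⟩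
    rw [L, hset, finsum_mem_singleton, if_pos rfl, motzWeight, Finset.range_zero,
      Finset.prod_empty]
  · have hset : Sset 0 k = ∅ := by
      ext h
      simp only [Set.mem_empty_iff_false, iff_false]
      rintro ⟨h0, hge, -⟩
      exact hk (by rw [← hge 0 (le_refl 0), h0])
    rw [L, hset, finsum_mem_empty, if_neg hk]

lemma img_disj (n k : ℕ) {a b : ℕ} (hab : a ≠ b) :
    Disjoint (extFun n k '' Sset n a) (extFun n k '' Sset n b) := by
  rw [Set.disjoint_left]
  rintro h ⟨h1, hm1, rfl⟩ ⟨h2, hm2, heq⟩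
  apply hab
  have e1 : extFun n k h1 n = a := by
    have : extFun n k h1 n = h1 n := if_pos (le_refl n)
    rw [this]; exact mem_sset_val hm1
  have e2 : extFun n k h2 n = b := by
    have : extFun n k h2 n = h2 n := if_pos (le_refl n)
    rw [this]; exact mem_sset_val hm2
  rw [← e1, ← heq, e2]

lemma L_comp (ρ : ℝ) (n k k' : ℕ) :
    ∑ᶠ h ∈ extFun n k '' Sset n k', motzWeight ρ (n+1) h
      = (if k = k' then (k':ℝ) + ρ else if k + 1 = k' then (k':ℝ) * ρ else 1) * L ρ n k' := by
  rw [finsum_mem_image extFun_injOn]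
  rw [finsum_mem_congr rfl (fun h hh => extFun_weight ρ (k := k) hh)]
  rw [L, finsum_mem_eq_finite_toFinset_sum _ (sset_finite n k'),
    finsum_mem_eq_finite_toFinset_sum _ (sset_finite n k'), ← Finset.sum_mul, mul_comm]

lemma sset_succ_zero (n : ℕ) :
    Sset (n+1) 0 = extFun n 0 '' Sset n 0 ∪ extFun n 0 '' Sset n 1 := by
  apply Set.eq_of_subset_of_subset
  · intro h hh
    obtain ⟨k', hadj, h', hmem, hext⟩ := sset_succ_sub hh
    have : k' = 0 ∨ k' = 1 := by omega
    rcases this with rfl | rfl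
    · exact Or.inl ⟨h', hmem, hext⟩
    · exact Or.inr ⟨h', hmem, hext⟩
  · rintro h (⟨h', hm, rfl⟩ | ⟨h', hm, rfl⟩)
    · exact extFun_mem (Or.inl rfl) hm
    · exact extFun_mem (Or.inr (Or.inl rfl)) hm

lemma sset_succ_pos (n k : ℕ) :
    Sset (n+1) (k+1)
      = (extFun n (k+1) '' Sset n (k+1) ∪ extFun n (k+1) '' Sset n (k+2))
        ∪ extFun n (k+1) '' Sset n k := by
  apply Set.eq_of_subset_of_subset
  · intro h hh
    obtain ⟨k', hadj, h', hmem, hext⟩ := sset_succ_sub hh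
    have : k' = k + 1 ∨ k' = k + 2 ∨ k' = k := by omega
    rcases this with rfl | rfl | rfl
    · exact Or.inl (Or.inl ⟨h', hmem, hext⟩)
    · exact Or.inl (Or.inr ⟨h', hmem, hext⟩)
    · exact Or.inr ⟨h', hmem, hext⟩
  · rintro h ((⟨h', hm, rfl⟩ | ⟨h', hm, rfl⟩) | ⟨h', hm, rfl⟩)
    · exact extFun_mem (Or.inl rfl) hm
    · exact extFun_mem (Or.inr (Or.inl rfl)) hm
    · exact extFun_mem (Or.inr (Or.inr rfl)) hm

lemma L_succ (ρ : ℝ) (n k : ℕ) :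
    L ρ (n+1) k = ((k:ℝ)+ρ) * L ρ n k + ((k:ℝ)+1)*ρ * L ρ n (k+1)
      + (if k = 0 then 0 else L ρ n (k-1)) := by
  cases k with
  | zero =>
    rw [L, sset_succ_zero n,
      finsum_mem_union (img_disj n 0 (by omega))
        ((sset_finite n 0).image _) ((sset_finite n 1).image _),
      L_comp, L_comp]
    norm_num
  | succ j =>
    rw [L, sset_succ_pos n j,
      finsum_mem_union
        (by
          apply Set.disjoint_union_left.mpr
          exact ⟨img_disj n (j+1) (by omega), img_disj n (j+1) (by omega)⟩)
        (((sset_finite n (j+1)).image _).union ((sset_finite n (j+2)).image _))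
        ((sset_finite n j).image _),
      finsum_mem_union (img_disj n (j+1) (by omega))
        ((sset_finite n (j+1)).image _) ((sset_finite n (j+2)).image _),
      L_comp, L_comp, L_comp]
    simp only [eq_false (by omega : ¬(j+1 = j+2)), eq_true (by omega : j+1+1 = j+2),
      eq_false (by omega : ¬(j+1 = j)), eq_false (by omega : ¬(j+1+1 = j)),
      eq_false (by omega : ¬(j+1 = 0)), eq_true (by omega : j+1 = j+1),
      if_true, if_false, Nat.add_sub_cancel]
    push_cast
    ring

lemma L_eq_G (ρ : ℝ) (n k : ℕ) : L ρ n k = G ρ n k := by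
  induction n generalizing k with
  | zero => rw [L_zero, G_zero]
  | succ n ih => rw [L_succ, G_succ, ih, ih]; by_cases hk : k = 0 <;> simp [hk, ih]

/-- Under the Charlier specialization `x_k = k + ρ − 1`, `y_k = kρ`, the `n`-th
normalized Motzkin moment equals the Bell/Touchard polynomial
`Σ_{π ∈ Π(n)} ρ^{#blocks(π)}`, where set partitions of `{1,…,n}` are encoded as
equivalence relations on `Fin n` and the number of blocks is the number of
equivalence classes. -/
theorem charlier_moments_eq_bell (ρ : ℝ) (n : ℕ) :
    ∑ᶠ h ∈ {h : ℕ → ℕ | IsMotzkinHt n h}, motzWeight ρ n h =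
      ∑ᶠ s : Setoid (Fin n), ρ ^ (Nat.card (Quotient s)) := by
  have hset : {h : ℕ → ℕ | IsMotzkinHt n h} = Sset n 0 := by
    ext h
    constructor
    · rintro ⟨h0, hn, hge, hstep⟩
      exact ⟨h0, hge, hstep⟩
    · rintro ⟨h0, hge, hstep⟩
      exact ⟨h0, hge n (le_refl n), hge, hstep⟩
  rw [hset, show (∑ᶠ h ∈ Sset n 0, motzWeight ρ n h) = L ρ n 0 from rfl, L_eq_G,
    finsum_eq_sum_of_fintype, G]
  refine Finset.sum_congr rfl fun s _ => ?_
  rw [F, Nat.choose_zero_right, Nat.sub_zero, Nat.cast_one, one_mul]
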